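/- For every integer n ≥ 2, the domination number of the directed n-constrained de Bruijn graph on n symbols (whose vertices are the permutations of [n]) satisfies γ(cDB⁺(n,n,n)) = ⌈n/2⌉ · (n−1)!. -/

import Mathlib

/-- A sequence `x` of length `n` over the alphabet `Fin d` is `t`-constrained if
equal symbols occur at positions at distance at least `t`. -/
def dbConstrained (d t n : ℕ) (x : Fin n → Fin d) : Prop :=
  ∀ i j : Fin n, i < j → x i = x j → t ≤ (j : ℕ) - (i : ℕ)

/-- The vertex set `V(d,t,n)` of the `t`-constrained de Bruijn graph: all
`t`-constrained sequences of length `n` over a `d`-letter alphabet. -/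
abbrev dbVtx (d t n : ℕ) : Type := {x : Fin n → Fin d // dbConstrained d t n x}

/-- `dbShift x y` holds when there is a directed de Bruijn edge from `x` to `y`,
i.e. `y` is obtained from `x` by deleting its first symbol and appending a new
last symbol. -/
def dbShift {d t n : ℕ} (x y : dbVtx d t n) : Prop :=
  ∀ (i : Fin n) (h : (i : ℕ) + 1 < n), y.val i = x.val ⟨(i : ℕ) + 1, h⟩

/-- `S` is a dominating set of the directed `t`-constrained de Bruijn graph
`cDB⁺(d,t,n)`: every vertex is dominated by (equal to, or an out-neighbor of)
some element of `S`. -/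
def dbDirDominating {d t n : ℕ} (S : Set (dbVtx d t n)) : Prop :=
  ∀ v : dbVtx d t n, ∃ s ∈ S, s = v ∨ dbShift s v

/-- The domination number `γ(cDB⁺(d,t,n))` of the directed `t`-constrained
de Bruijn graph. -/
noncomputable def gammaDir (d t n : ℕ) : ℕ :=
  sInf {k | ∃ S : Set (dbVtx d t n), S.Finite ∧ S.ncard = k ∧ dbDirDominating S}

/-- Adjacency in the undirected `t`-constrained de Bruijn graph `cDB(d,t,n)`:
edge directions are ignored and loops are removed. -/
def dbAdj {d t n : ℕ} (x y : dbVtx d t n) : Prop :=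
  x ≠ y ∧ (dbShift x y ∨ dbShift y x)

/-- `S` is a dominating set of the undirected graph `cDB(d,t,n)`: every vertex
is dominated by (equal to, or adjacent to) some element of `S`. -/
def dbUndirDominating {d t n : ℕ} (S : Set (dbVtx d t n)) : Prop :=
  ∀ v : dbVtx d t n, ∃ s ∈ S, s = v ∨ dbAdj s v

/-- The domination number `γ(cDB(d,t,n))` of the undirected `t`-constrained
de Bruijn graph. -/
noncomputable def gammaUndir (d t n : ℕ) : ℕ :=
  sInf {k | ∃ S : Set (dbVtx d t n), S.Finite ∧ S.ncard = k ∧ dbUndirDominating S}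


namespace DBAux
variable {m : ℕ}
open Fin.NatCast Fin.CommRing
abbrev N (m : ℕ) := m + 2
abbrev V (m : ℕ) := dbVtx (N m) (N m) (N m)

lemma const_iff (x : Fin (N m) → Fin (N m)) :
    dbConstrained (N m) (N m) (N m) x ↔ Function.Injective x := by
  constructor
  · intro h a b hab
    by_contra hne
    rcases Ne.lt_or_gt (fun h' => hne h') with hlt | hlt
    · have := h a b hlt hab; omega
    · have := h b a hlt hab.symm; omega
  · intro h i j hij heq
    exact absurd (h heq) (fun h' => absurd h' (ne_of_lt hij))

lemma inj (x : V m) : Function.Injective x.val := (const_iff x.val).mp x.2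
lemma bij (x : V m) : Function.Bijective x.val :=
  (Finite.injective_iff_bijective).mp (inj x)

def rotV (x : V m) : V m :=
  ⟨fun i => x.val (i + 1), (const_iff _).mpr
    ((inj x).comp (fun a b h => by simpa using h))⟩
def irotV (x : V m) : V m :=
  ⟨fun i => x.val (i - 1), (const_iff _).mpr
    ((inj x).comp (fun a b h => by simpa using sub_left_injective h))⟩

@[simp] lemma rotV_val (x : V m) (i : Fin (N m)) : (rotV x).val i = x.val (i + 1) := rfl
@[simp] lemma irotV_val (x : V m) (i : Fin (N m)) : (irotV x).val i = x.val (i - 1) := rfl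

lemma rot_irot (x : V m) : rotV (irotV x) = x := by apply Subtype.ext; funext i; simp
lemma irot_rot (x : V m) : irotV (rotV x) = x := by apply Subtype.ext; funext i; simp

lemma fin_coe_eq (i : Fin (N m)) (h : (i : ℕ) + 1 < N m) :
    (i + 1 : Fin (N m)) = ⟨(i : ℕ) + 1, h⟩ := by
  apply Fin.ext
  rw [Fin.val_add_one]
  split
  · rename_i he
    exfalso; rw [he] at h; simp [Fin.val_last] at h
  · rfl

lemma dbShift_iff (x y : V m) : dbShift x y ↔ y = rotV x := by
  constructor
  · intro h
    apply Subtype.ext; funext i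
    by_cases hi : (i : ℕ) + 1 < N m
    · rw [h i hi, rotV_val, fin_coe_eq i hi]
    · have hi' : ¬ (i : ℕ) + 1 < m + 2 := hi
      have hlt' : (i : ℕ) < m + 2 := i.isLt
      have hlast : (i : ℕ) = m + 1 := by omega
      obtain ⟨j, hj⟩ := (bij x).2 (y.val i)
      rcases Nat.eq_zero_or_pos (j : ℕ) with hj0 | hj0
      · have hz : j = 0 := Fin.ext hj0
        subst hz
        have hi1 : (i + 1 : Fin (N m)) = 0 := by
          have hl : i = Fin.last (m+1) := by
            apply Fin.ext; simp only [Fin.val_last]; exact hlast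
          rw [hl]; simp
        rw [rotV_val, hi1, hj]
      · exfalso
        have hjlt := j.isLt
        have hj'1 : ((j : ℕ) - 1) + 1 < N m := by omega
        have := h ⟨(j : ℕ) - 1, by omega⟩ hj'1
        have hjj : (⟨((⟨(j : ℕ) - 1, by omega⟩ : Fin (N m)) : ℕ) + 1, hj'1⟩ : Fin (N m)) = j := by
          apply Fin.ext; show (j:ℕ) - 1 + 1 = (j:ℕ); omega
        rw [hjj, hj] at this
        have heq : (⟨(j : ℕ) - 1, by omega⟩ : Fin (N m)) = i := inj y this
        have : (j : ℕ) - 1 = (i : ℕ) := congrArg Fin.val heq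
        omega
  · rintro rfl
    intro i h
    rw [rotV_val, fin_coe_eq i h]

lemma rotV_iterate_val (k : ℕ) (x : V m) (i : Fin (N m)) :
    ((rotV)^[k] x).val i = x.val (i + (k : Fin (N m))) := by
  induction k generalizing i with
  | zero => simp
  | succ k ih =>
    rw [Function.iterate_succ_apply', rotV_val, ih]
    congr 1
    push_cast
    ring

lemma rotV_pow_n (x : V m) : (rotV)^[N m] x = x := by
  apply Subtype.ext; funext i
  rw [rotV_iterate_val, show ((N m : ℕ) : Fin (N m)) = 0 by simp, add_zero]

noncomputable def posV (x : V m) : Fin (N m) :=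
  (Equiv.ofBijective x.val (bij x)).symm 0

lemma posV_spec (x : V m) : x.val (posV x) = 0 := by
  have := (Equiv.ofBijective x.val (bij x)).apply_symm_apply 0
  exact this

lemma posV_unique (x : V m) (j : Fin (N m)) (hj : x.val j = 0) : j = posV x :=
  inj x (by rw [hj, posV_spec])

lemma posV_irot (x : V m) : posV (irotV x) = posV x + 1 := by
  symm
  apply posV_unique
  rw [irotV_val, add_sub_cancel_right, posV_spec]

lemma posV_irot_iterate (k : ℕ) (x : V m) :
    posV ((irotV)^[k] x) = posV x + (k : Fin (N m)) := by
  induction k with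
  | zero => simp
  | succ k ih =>
    rw [Function.iterate_succ_apply', posV_irot, ih]
    push_cast
    ring

noncomputable def canonV (x : V m) : V m := (rotV)^[(posV x).val] x

lemma canonV_val0 (x : V m) : (canonV x).val 0 = 0 := by
  rw [canonV, rotV_iterate_val, Fin.cast_val_eq_self, zero_add, posV_spec]

lemma irot_iterate_rot_iterate (k : ℕ) (x : V m) : (irotV)^[k] ((rotV)^[k] x) = x :=
  (Function.LeftInverse.iterate irot_rot k) x

lemma rot_iterate_irot_iterate (k : ℕ) (x : V m) : (rotV)^[k] ((irotV)^[k] x) = x :=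
  (Function.LeftInverse.iterate rot_irot k) x

/-- Vertices with `0` in position `0`. -/
abbrev V0 (m : ℕ) := {x : V m // x.val 0 = 0}

noncomputable def Phi : V m ≃ V0 m × Fin (N m) where
  toFun v := (⟨canonV v, canonV_val0 v⟩, posV v)
  invFun t := (irotV)^[(t.2 : ℕ)] t.1.val
  left_inv v := by
    simp only [canonV]
    exact irot_iterate_rot_iterate _ v
  right_inv t := by
    obtain ⟨⟨y, hy⟩, k⟩ := t
    have hpy : posV y = 0 := (posV_unique y 0 hy).symm
    have hpos : posV ((irotV)^[(k : ℕ)] y) = k := by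
      rw [posV_irot_iterate, hpy, zero_add, Fin.cast_val_eq_self]
    simp only [Prod.mk.injEq, Subtype.mk.injEq]
    constructor
    · rw [canonV, hpos]
      exact rot_iterate_irot_iterate _ y
    · exact hpos

lemma Phi_symm_apply (t : V0 m × Fin (N m)) : Phi.symm t = (irotV)^[(t.2 : ℕ)] t.1.val := rfl

lemma irotV_pow_n (x : V m) : (irotV)^[N m] x = x := by
  have := irot_iterate_rot_iterate (N m) x
  rwa [rotV_pow_n x] at this

lemma Phi_symm_succ (y : V0 m) (k : Fin (N m)) :
    Phi.symm (y, k + 1) = irotV (Phi.symm (y, k)) := by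
  rw [Phi_symm_apply, Phi_symm_apply]
  rw [← Function.iterate_succ_apply' irotV]
  by_cases hk : (k : ℕ) + 1 < N m
  · congr 1
    rw [fin_coe_eq k hk]
  · have hk2 : ¬ (k : ℕ) + 1 < m + 2 := hk
    have hk3 : (k : ℕ) < m + 2 := k.isLt
    have hk' : (k : ℕ) = m + 1 := by omega
    have h1 : (k + 1 : Fin (N m)) = 0 := by
      have hl : k = Fin.last (m+1) := by apply Fin.ext; simp only [Fin.val_last]; exact hk'
      rw [hl]; simp
    rw [h1]
    show (irotV)^[0] y.val = (irotV)^[(k:ℕ) + 1] y.val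
    rw [hk']
    exact (irotV_pow_n y.val).symm


lemma fin_cover (A : Finset (Fin (N m))) (h : ∀ k : Fin (N m), k ∈ A ∨ k + 1 ∈ A) :
    (m + 3) / 2 ≤ A.card := by
  have h1 : Aᶜ.card ≤ A.card := by
    apply Finset.card_le_card_of_injOn (fun k => k + 1)
    · intro k hk
      rcases h k with h' | h'
      · exact absurd h' (Finset.mem_compl.mp hk)
      · exact h'
    · intro a _ b _ hab
      simpa using hab
  have h2 : Aᶜ.card = (m + 2) - A.card := by
    rw [Finset.card_compl]
    congr 1
    simp
  have h3 : A.card ≤ m + 2 := by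
    have := Finset.card_le_univ A
    simpa using this
  omega

lemma range_even_card (n : ℕ) :
    ((Finset.range n).filter (fun k => k % 2 = 0)).card = (n + 1) / 2 := by
  induction n with
  | zero => simp
  | succ n ih =>
    rw [Finset.range_add_one, Finset.filter_insert]
    by_cases h : n % 2 = 0
    · rw [if_pos h, Finset.card_insert_of_notMem (by simp), ih]
      omega
    · rw [if_neg h, ih]
      omega

lemma fin_even_card :
    (Finset.univ.filter (fun k : Fin (N m) => (k : ℕ) % 2 = 0)).card = (m + 3) / 2 := by
  have hb : (Finset.univ.filter (fun k : Fin (N m) => (k : ℕ) % 2 = 0)).card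
      = ((Finset.range (m + 2)).filter (fun k => k % 2 = 0)).card := by
    refine Finset.card_bij (fun (k : Fin (N m)) _ => (k : ℕ)) ?_ ?_ ?_
    · intro a ha
      simp only [Finset.mem_filter, Finset.mem_range] at ha ⊢
      exact ⟨a.isLt, ha.2⟩
    · intro a _ b _ hab
      exact Fin.ext hab
    · intro b hb
      simp only [Finset.mem_filter, Finset.mem_range] at hb
      exact ⟨⟨b, hb.1⟩, by simp [hb.2], rfl⟩
  rw [hb, range_even_card]

lemma prod_lower {Y : Type} [Fintype Y] [DecidableEq Y]
    (T : Finset (Y × Fin (N m)))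
    (h : ∀ t : Y × Fin (N m), t ∈ T ∨ (t.1, t.2 + 1) ∈ T) :
    Fintype.card Y * ((m + 3) / 2) ≤ T.card := by
  rw [Finset.card_eq_sum_card_fiberwise
    (f := Prod.fst) (t := Finset.univ) (fun x _ => Finset.mem_univ _)]
  have key : ∀ y : Y, (m + 3) / 2 ≤ (T.filter (fun t => t.1 = y)).card := by
    intro y
    have hle := Finset.card_image_le (s := T.filter (fun t => t.1 = y)) (f := Prod.snd)
    refine le_trans (fin_cover _ ?_) hle
    intro k
    rcases h (y, k) with h' | h'
    · exact Or.inl (Finset.mem_image.mpr ⟨(y, k), Finset.mem_filter.mpr ⟨h', rfl⟩, rfl⟩)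
    · exact Or.inr (Finset.mem_image.mpr ⟨(y, k + 1), Finset.mem_filter.mpr ⟨h', rfl⟩, rfl⟩)
  calc Fintype.card Y * ((m + 3) / 2) = ∑ _y : Y, (m + 3) / 2 := by
        rw [Finset.sum_const, smul_eq_mul, Finset.card_univ]
    _ ≤ ∑ y : Y, (T.filter (fun t => t.1 = y)).card :=
        Finset.sum_le_sum (fun y _ => key y)

noncomputable def permEquiv : V m ≃ Equiv.Perm (Fin (N m)) where
  toFun x := Equiv.ofBijective x.val (bij x)
  invFun e := ⟨e, (const_iff e).mpr e.injective⟩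
  left_inv x := Subtype.ext rfl
  right_inv e := Equiv.ext fun i => rfl

lemma card_V : Nat.card (V m) = (m + 2).factorial := by
  rw [Nat.card_congr (permEquiv (m := m)), Nat.card_eq_fintype_card, Fintype.card_perm,
    Fintype.card_fin]

lemma card_V0 : Nat.card (V0 m) = (m + 1).factorial := by
  have h1 : Nat.card (V m) = Nat.card (V0 m) * (m + 2) := by
    rw [Nat.card_congr (Phi (m := m)), Nat.card_prod]
    congr 1
    simp [Nat.card_eq_fintype_card]
  have h2 : (m + 2).factorial = (m + 2) * (m + 1).factorial := rfl
  have := card_V (m := m)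
  rw [h1, h2] at this
  rw [mul_comm (m + 2)] at this
  exact Nat.eq_of_mul_eq_mul_right (by omega) this


lemma ceil_half (n : ℕ) : ⌈(n : ℚ) / 2⌉₊ = (n + 1) / 2 := by
  apply le_antisymm
  · rw [Nat.ceil_le, div_le_iff₀ (by norm_num : (0:ℚ) < 2)]
    have h : (n : ℕ) ≤ (n + 1) / 2 * 2 := by omega
    exact_mod_cast h
  · have h := Nat.le_ceil ((n : ℚ) / 2)
    rw [div_le_iff₀ (by norm_num : (0:ℚ) < 2)] at h
    have h3 : n ≤ ⌈(n : ℚ) / 2⌉₊ * 2 := by exact_mod_cast h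
    omega

lemma dominating_iff (S : Set (V m)) :
    dbDirDominating S ↔ ∀ v : V m, v ∈ S ∨ irotV v ∈ S := by
  unfold dbDirDominating
  apply forall_congr'
  intro v
  constructor
  · rintro ⟨s, hs, rfl | hshift⟩
    · exact Or.inl hs
    · right
      rw [dbShift_iff] at hshift
      have hsv : s = irotV v := by rw [hshift, irot_rot]
      rwa [← hsv]
  · rintro (h | h)
    · exact ⟨v, h, Or.inl rfl⟩
    · exact ⟨irotV v, h, Or.inr (by rw [dbShift_iff, rot_irot])⟩

/-- The set of the "even" second coordinates. -/
def EvenSet (m : ℕ) : Set (Fin (N m)) := {k : Fin (N m) | (k : ℕ) % 2 = 0}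

lemma ncard_EvenSet : (EvenSet m).ncard = (m + 3) / 2 := by
  have h : EvenSet m = ↑(Finset.univ.filter (fun k : Fin (N m) => (k : ℕ) % 2 = 0)) := by
    ext k
    simp [EvenSet]
  rw [h, Set.ncard_coe_finset, fin_even_card]

lemma S0_dominating :
    dbDirDominating {v : V m | ((posV v : ℕ)) % 2 = 0} := by
  rw [dominating_iff]
  intro v
  by_cases h : (posV v : ℕ) % 2 = 0
  · exact Or.inl h
  · right
    show (posV (irotV v) : ℕ) % 2 = 0
    rw [posV_irot, Fin.val_add_one]
    split
    · rfl
    · omega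

lemma S0_ncard :
    ({v : V m | ((posV v : ℕ)) % 2 = 0} : Set (V m)).ncard
      = (m + 1).factorial * ((m + 3) / 2) := by
  classical
  have hpre : {v : V m | ((posV v : ℕ)) % 2 = 0}
      = Phi ⁻¹' ((Set.univ : Set (V0 m)) ×ˢ EvenSet m) := by
    ext v
    simp [Set.mem_prod, EvenSet, Phi]
  rw [hpre, ← Equiv.symm_symm Phi, ← Equiv.image_eq_preimage_symm,
    Set.ncard_image_of_injective _ (Phi.symm.injective)]
  rw [← Nat.card_coe_set_eq, Nat.card_congr (Equiv.Set.prod _ _), Nat.card_prod,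
    Nat.card_congr (Equiv.Set.univ _), card_V0, Nat.card_coe_set_eq, ncard_EvenSet]

lemma lower_bound (S : Set (V m)) (hfin : S.Finite) (hdom : dbDirDominating S) :
    (m + 1).factorial * ((m + 3) / 2) ≤ S.ncard := by
  classical
  letI : Fintype (V0 m) := Fintype.ofFinite _
  have hTfin : (Phi '' S).Finite := hfin.image _
  have hmem : ∀ t, t ∈ hTfin.toFinset ↔ Phi.symm t ∈ S := by
    intro t
    rw [Set.Finite.mem_toFinset, Equiv.image_eq_preimage_symm]
    rfl
  have hcond : ∀ t : V0 m × Fin (N m),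
      t ∈ hTfin.toFinset ∨ (t.1, t.2 + 1) ∈ hTfin.toFinset := by
    intro t
    rcases (dominating_iff S).mp hdom (Phi.symm t) with h | h
    · exact Or.inl ((hmem t).mpr h)
    · right
      apply (hmem _).mpr
      rw [Phi_symm_succ t.1 t.2]
      exact h
  have hlow := prod_lower hTfin.toFinset hcond
  have hcard : hTfin.toFinset.card = S.ncard := by
    rw [← Set.ncard_eq_toFinset_card _ hTfin]
    exact Set.ncard_image_of_injective _ Phi.injective
  have hY : Fintype.card (V0 m) = (m + 1).factorial := by
    rw [← Nat.card_eq_fintype_card, card_V0]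
  rw [hY, hcard] at hlow
  exact hlow

end DBAux

open DBAux

/-- `γ(cDB⁺(n,n,n)) = ⌈n/2⌉ * (n-1)!`. -/
theorem gammaDir_permutations (n : ℕ) (hn : 2 ≤ n) :
    gammaDir n n n = ⌈(n : ℚ) / 2⌉₊ * (n - 1).factorial := by
  obtain ⟨m, rfl⟩ : ∃ m, n = m + 2 := ⟨n - 2, by omega⟩
  rw [ceil_half]
  show gammaDir (N m) (N m) (N m) = (m + 2 + 1) / 2 * (m + 2 - 1).factorial
  have hgoal : (m + 2 + 1) / 2 * (m + 2 - 1).factorial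
      = (m + 1).factorial * ((m + 3) / 2) := by
    rw [mul_comm]
    rfl
  rw [hgoal]
  unfold gammaDir
  have hmemK : (m + 1).factorial * ((m + 3) / 2) ∈
      {k | ∃ S : Set (V m), S.Finite ∧ S.ncard = k ∧ dbDirDominating S} :=
    ⟨{v : V m | ((posV v : ℕ)) % 2 = 0}, Set.toFinite _, S0_ncard, S0_dominating⟩
  apply le_antisymm
  · exact Nat.sInf_le hmemK
  · have hne : {k | ∃ S : Set (V m), S.Finite ∧ S.ncard = k ∧ dbDirDominating S}.Nonempty :=
      ⟨_, hmemK⟩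
    obtain ⟨S, hfin, hcard, hdom⟩ := Nat.sInf_mem hne
    rw [← hcard]
    exact lower_bound S hfin hdom
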